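/- For every graph G and every integer n > 1, the product of the maximum number of pairwise G-creating Hamiltonian paths of K_n and the maximum number of pairwise non-G-creating Hamiltonian paths of K_n is at most n!/2. -/

import Mathlib

/-- `A` is contained in `B` as a (not necessarily induced) subgraph. -/
def containsCopy {α β : Type*} (A : SimpleGraph α) (B : SimpleGraph β) : Prop :=
  ∃ f : α ↪ β, ∀ u v, A.Adj u v → B.Adj (f u) (f v)

/-- `H` is (the edge graph of) a Hamiltonian path of the complete graph on `Fin n`. -/
def IsHamPath {n : ℕ} (H : SimpleGraph (Fin n)) : Prop :=
  ∃ f : Equiv.Perm (Fin n), ∀ u v, H.Adj u v ↔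
    ∃ i j : Fin n, (j : ℕ) = (i : ℕ) + 1 ∧ ((u = f i ∧ v = f j) ∨ (u = f j ∧ v = f i))

/-- The maximum number of pairwise `G`-creating Hamiltonian paths of `K_n`. -/
noncomputable def Hmax {β : Type*} (n : ℕ) (G : SimpleGraph β) : ℕ :=
  sSup {k | ∃ F : Finset (SimpleGraph (Fin n)), (∀ H ∈ F, IsHamPath H) ∧
    (∀ H₁ ∈ F, ∀ H₂ ∈ F, H₁ ≠ H₂ → containsCopy G (H₁ ⊔ H₂)) ∧ F.card = k}

/-- The maximum number of pairwise non-`G`-creating Hamiltonian paths of `K_n`. -/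
noncomputable def Hbarmax {β : Type*} (n : ℕ) (G : SimpleGraph β) : ℕ :=
  sSup {k | ∃ F : Finset (SimpleGraph (Fin n)), (∀ H ∈ F, IsHamPath H) ∧
    (∀ H₁ ∈ F, ∀ H₂ ∈ F, H₁ ≠ H₂ → ¬ containsCopy G (H₁ ⊔ H₂)) ∧ F.card = k}

/-- The path graph determined by a permutation. -/
def pathG {n : ℕ} (f : Equiv.Perm (Fin n)) : SimpleGraph (Fin n) where
  Adj u v := ∃ i j : Fin n, (j : ℕ) = (i : ℕ) + 1 ∧
    ((u = f i ∧ v = f j) ∨ (u = f j ∧ v = f i))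
  symm := by
    constructor
    rintro u v ⟨i, j, hij, h⟩
    exact ⟨i, j, hij, by tauto⟩
  loopless := by
    constructor
    rintro u ⟨i, j, hij, h⟩
    have : f i = f j := by
      rcases h with ⟨h1, h2⟩ | ⟨h1, h2⟩
      · exact h1.symm.trans h2
      · exact h2.symm.trans h1
    have : i = j := f.injective this
    subst this
    omega

@[simp] lemma pathG_adj {n : ℕ} (f : Equiv.Perm (Fin n)) (u v : Fin n) :
    (pathG f).Adj u v ↔ ∃ i j : Fin n, (j : ℕ) = (i : ℕ) + 1 ∧
      ((u = f i ∧ v = f j) ∨ (u = f j ∧ v = f i)) := Iff.rfl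

lemma isHamPath_iff {n : ℕ} (H : SimpleGraph (Fin n)) :
    IsHamPath H ↔ ∃ f : Equiv.Perm (Fin n), H = pathG f := by
  constructor
  · rintro ⟨f, hf⟩
    exact ⟨f, SimpleGraph.ext (by ext u v; exact hf u v)⟩
  · rintro ⟨f, rfl⟩
    exact ⟨f, fun u v => Iff.rfl⟩

lemma pathG_le_rev {n : ℕ} (f : Equiv.Perm (Fin n)) :
    pathG f ≤ pathG (Fin.revPerm.trans f) := by
  rintro u v ⟨i, j, hij, h⟩
  refine ⟨j.rev, i.rev, ?_, ?_⟩
  · have hj := j.isLt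
    simp only [Fin.val_rev]
    omega
  · simp only [Equiv.trans_apply, Fin.revPerm_apply, Fin.rev_rev]
    tauto

lemma pathG_rev {n : ℕ} (f : Equiv.Perm (Fin n)) :
    pathG (Fin.revPerm.trans f) = pathG f := by
  have h2 := pathG_le_rev (Fin.revPerm.trans f)
  have he : Fin.revPerm.trans (Fin.revPerm.trans f) = f := by
    ext x
    simp [Fin.rev_rev]
  rw [he] at h2
  exact le_antisymm h2 (pathG_le_rev f)

lemma map_pathG {n : ℕ} (σ f : Equiv.Perm (Fin n)) :
    (pathG f).map σ.toEmbedding = pathG (f.trans σ) := by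
  ext u v
  rw [SimpleGraph.map_adj]
  simp only [SimpleGraph.map_adj, Equiv.coe_toEmbedding, pathG_adj, Equiv.trans_apply]
  constructor
  · rintro ⟨a, b, ⟨i, j, hij, h⟩, ha, hb⟩
    refine ⟨i, j, hij, ?_⟩
    rcases h with ⟨h1, h2⟩ | ⟨h1, h2⟩ <;> subst h1 h2 ha hb <;> tauto
  · rintro ⟨i, j, hij, h⟩
    rcases h with ⟨h1, h2⟩ | ⟨h1, h2⟩
    · exact ⟨f i, f j, ⟨i, j, hij, Or.inl ⟨rfl, rfl⟩⟩, h1.symm, h2.symm⟩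
    · exact ⟨f j, f i, ⟨i, j, hij, Or.inr ⟨rfl, rfl⟩⟩, h1.symm, h2.symm⟩

lemma map_sup' {n : ℕ} (σ : Equiv.Perm (Fin n)) (A B : SimpleGraph (Fin n)) :
    (A ⊔ B).map σ.toEmbedding = A.map σ.toEmbedding ⊔ B.map σ.toEmbedding := by
  ext u v
  simp only [SimpleGraph.map_adj, SimpleGraph.sup_adj]
  aesop

lemma containsCopy_map {β : Type*} {n : ℕ} (G : SimpleGraph β) (A : SimpleGraph (Fin n))
    (σ : Equiv.Perm (Fin n)) (h : containsCopy G A) :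
    containsCopy G (A.map σ.toEmbedding) := by
  obtain ⟨e, he⟩ := h
  refine ⟨e.trans σ.toEmbedding, fun u v huv => ?_⟩
  rw [SimpleGraph.map_adj]
  exact ⟨e u, e v, he u v huv, rfl, rfl⟩

lemma map_pathG_eq {n : ℕ} (f f' : Equiv.Perm (Fin n)) :
    (pathG f).map (f.symm.trans f').toEmbedding = pathG f' := by
  rw [map_pathG]
  congr 1
  ext i
  simp

lemma map_pathG_eq' {n : ℕ} (f f' : Equiv.Perm (Fin n)) :
    (pathG f).map (f.symm.trans (Fin.revPerm.trans f')).toEmbedding = pathG f' := by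
  rw [map_pathG, ← pathG_rev f']
  congr 1
  ext i
  simp

/-- choice of a path witness -/
noncomputable def wit {n : ℕ} (H : SimpleGraph (Fin n)) : Equiv.Perm (Fin n) :=
  @dite _ (∃ f : Equiv.Perm (Fin n), H = pathG f) (Classical.dec _) (fun h => h.choose)
    (fun _ => 1)

lemma wit_spec {n : ℕ} {H : SimpleGraph (Fin n)} (h : IsHamPath H) : H = pathG (wit H) := by
  rw [isHamPath_iff] at h
  rw [wit, dif_pos h]
  exact h.choose_spec

lemma key {β : Type*} (G : SimpleGraph β) {n : ℕ} (hn : 1 < n)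
    (F F' : Finset (SimpleGraph (Fin n)))
    (hF : ∀ H ∈ F, IsHamPath H)
    (hFc : ∀ H₁ ∈ F, ∀ H₂ ∈ F, H₁ ≠ H₂ → containsCopy G (H₁ ⊔ H₂))
    (hF' : ∀ H ∈ F', IsHamPath H)
    (hF'c : ∀ H₁ ∈ F', ∀ H₂ ∈ F', H₁ ≠ H₂ → ¬ containsCopy G (H₁ ⊔ H₂)) :
    F.card * F'.card * 2 ≤ n.factorial := by
  classical
  haveI : NeZero n := ⟨by omega⟩
  set φ : (SimpleGraph (Fin n) × SimpleGraph (Fin n)) × Bool → Equiv.Perm (Fin n) :=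
    fun p => if p.2 then (wit p.1.1).symm.trans (wit p.1.2)
      else (wit p.1.1).symm.trans (Fin.revPerm.trans (wit p.1.2)) with hφ
  -- the key map property
  have hmap : ∀ p : (SimpleGraph (Fin n) × SimpleGraph (Fin n)) × Bool,
      p.1.1 ∈ F → p.1.2 ∈ F' → p.1.1.map (φ p).toEmbedding = p.1.2 := by
    rintro ⟨⟨H, H'⟩, b⟩ h1 h2
    have e1 : H = pathG (wit H) := wit_spec (hF H h1)
    have e2 : H' = pathG (wit H') := wit_spec (hF' H' h2)
    cases b
    · show H.map ((wit H).symm.trans (Fin.revPerm.trans (wit H'))).toEmbedding = H'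
      calc H.map ((wit H).symm.trans (Fin.revPerm.trans (wit H'))).toEmbedding
          = (pathG (wit H)).map ((wit H).symm.trans (Fin.revPerm.trans (wit H'))).toEmbedding := by
            rw [← e1]
        _ = pathG (wit H') := map_pathG_eq' _ _
        _ = H' := e2.symm
    · show H.map ((wit H).symm.trans (wit H')).toEmbedding = H'
      calc H.map ((wit H).symm.trans (wit H')).toEmbedding
          = (pathG (wit H)).map ((wit H).symm.trans (wit H')).toEmbedding := by rw [← e1]
        _ = pathG (wit H') := map_pathG_eq _ _
        _ = H' := e2.symm
  have hcard : ((F ×ˢ F') ×ˢ (Finset.univ : Finset Bool)).card ≤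
      (Finset.univ : Finset (Equiv.Perm (Fin n))).card := by
    apply Finset.card_le_card_of_injOn φ (fun p _ => Finset.mem_univ _)
    rintro ⟨⟨H₁, H₁'⟩, b₁⟩ hp₁ ⟨⟨H₂, H₂'⟩, b₂⟩ hp₂ heq
    simp only [Finset.mem_product, Finset.mem_coe, Finset.mem_univ, and_true] at hp₁ hp₂
    obtain ⟨hH₁, hH₁'⟩ := hp₁
    obtain ⟨hH₂, hH₂'⟩ := hp₂
    have m1 := hmap ⟨⟨H₁, H₁'⟩, b₁⟩ hH₁ hH₁'
    have m2 := hmap ⟨⟨H₂, H₂'⟩, b₂⟩ hH₂ hH₂'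
    rw [heq] at m1
    -- first: H₁ = H₂
    have hHH : H₁ = H₂ := by
      by_contra hne
      by_cases hne' : H₁' = H₂'
      · apply hne
        apply SimpleGraph.map_injective (φ (⟨H₂, H₂'⟩, b₂)).toEmbedding
        rw [m1, m2, hne']
      · apply hF'c H₁' hH₁' H₂' hH₂' hne'
        have := containsCopy_map G (H₁ ⊔ H₂) (φ (⟨H₂, H₂'⟩, b₂))
          (hFc H₁ hH₁ H₂ hH₂ hne)
        rwa [map_sup', m1, m2] at this
    subst hHH
    have hHH' : H₁' = H₂' := m1.symm.trans m2
    subst hHH'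
    suffices hb : b₁ = b₂ by rw [hb]
    by_contra hb
    have htf : φ ((H₁, H₁'), true) = φ ((H₁, H₁'), false) := by
      cases b₁ <;> cases b₂
      · exact absurd rfl hb
      · exact heq.symm
      · exact heq
      · exact absurd rfl hb
    have h0 := DFunLike.congr_fun htf ((wit H₁) 0)
    simp only [hφ, reduceIte, Bool.false_eq_true, if_false, Equiv.trans_apply,
      Equiv.symm_apply_apply, Fin.revPerm_apply] at h0
    have h00 : (0 : Fin n) = Fin.rev 0 := (wit H₁').injective h0
    have := congrArg Fin.val h00
    simp only [Fin.val_rev, Fin.val_zero] at this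
    omega
  have hc2 : ((F ×ˢ F') ×ˢ (Finset.univ : Finset Bool)).card = F.card * F'.card * 2 := by
    simp [Finset.card_product]
  have hperm : (Finset.univ : Finset (Equiv.Perm (Fin n))).card = n.factorial := by
    simp [Finset.card_univ, Fintype.card_perm]
  rw [hc2, hperm] at hcard
  exact hcard

theorem stmt0 {β : Type*} (G : SimpleGraph β) (n : ℕ) (hn : 1 < n) :
    Hmax n G * Hbarmax n G ≤ n.factorial / 2 := by
  classical
  set S₁ := {k | ∃ F : Finset (SimpleGraph (Fin n)), (∀ H ∈ F, IsHamPath H) ∧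
    (∀ H₁ ∈ F, ∀ H₂ ∈ F, H₁ ≠ H₂ → containsCopy G (H₁ ⊔ H₂)) ∧ F.card = k} with hS₁
  set S₂ := {k | ∃ F : Finset (SimpleGraph (Fin n)), (∀ H ∈ F, IsHamPath H) ∧
    (∀ H₁ ∈ F, ∀ H₂ ∈ F, H₁ ≠ H₂ → ¬ containsCopy G (H₁ ⊔ H₂)) ∧ F.card = k} with hS₂
  have hne₁ : S₁.Nonempty := ⟨0, ∅, by simp⟩
  have hne₂ : S₂.Nonempty := ⟨0, ∅, by simp⟩
  have hbdd : ∀ k, (∃ F : Finset (SimpleGraph (Fin n)), F.card = k) →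
      k ≤ Fintype.card (SimpleGraph (Fin n)) := by
    rintro k ⟨F, rfl⟩
    exact Finset.card_le_univ F
  have hbdd₁ : BddAbove S₁ := ⟨Fintype.card (SimpleGraph (Fin n)),
    fun k hk => by obtain ⟨F, _, _, hc⟩ := hk; exact hbdd k ⟨F, hc⟩⟩
  have hbdd₂ : BddAbove S₂ := ⟨Fintype.card (SimpleGraph (Fin n)),
    fun k hk => by obtain ⟨F, _, _, hc⟩ := hk; exact hbdd k ⟨F, hc⟩⟩
  have h₁ : Hmax n G ∈ S₁ := Nat.sSup_mem hne₁ hbdd₁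
  have h₂ : Hbarmax n G ∈ S₂ := Nat.sSup_mem hne₂ hbdd₂
  obtain ⟨F, hF, hFc, hFcard⟩ := h₁
  obtain ⟨F', hF', hF'c, hF'card⟩ := h₂
  rw [← hFcard, ← hF'card]
  rw [Nat.le_div_iff_mul_le (by norm_num : 0 < 2)]
  exact key G hn F F' hF hFc hF' hF'c
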